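/- arXiv:0806.2248 — 2 statements merged into one kernel-verified Lean document; each statement's English description precedes it below -/
import Mathlib

section
/- Let H = 1/4 and define, for integers n ≥ 1 and 0 ≤ k, l ≤ n−1, ⟨ε_{l/n}, δ_{k/n}⟩ = (1/(2√n))(√(k+1) − √k − √|k+1−l| + √|k−l|), which equals the covariance E[β_{l/n}(β_{(k+1)/n} − β_{k/n})] for a fractional Brownian motion β of index 1/4. Then the double sum over k, l from 0 to n−1 of |⟨ε_{l/n}, δ_{k/n}⟩| is O(n) as n → ∞. -/
open Real Asymptotics Finset

/-- `⟨ε_{l/n}, δ_{k/n}⟩ = (1/(2√n))(√(k+1) − √k − √|k+1−l| + √|k−l|)`. -/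
noncomputable def epsDeltaInner (n k l : ℕ) : ℝ :=
  (1 / (2 * Real.sqrt n)) *
    (Real.sqrt (k + 1) - Real.sqrt k
      - Real.sqrt (|(k : ℝ) + 1 - l|) + Real.sqrt (|(k : ℝ) - l|))

/-- The auxiliary function `h l k = √|k − l|`. -/
noncomputable def hAux (l k : ℕ) : ℝ := Real.sqrt (|(k : ℝ) - l|)

lemma hAux_le (l k : ℕ) (h : k ≤ l) : hAux l k = Real.sqrt ((l : ℝ) - k) := by
  unfold hAux
  rw [abs_sub_comm, abs_of_nonneg]
  simp [Nat.cast_le.2 h]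

lemma hAux_ge (l k : ℕ) (h : l ≤ k) : hAux l k = Real.sqrt ((k : ℝ) - l) := by
  unfold hAux
  rw [abs_of_nonneg]
  simp [Nat.cast_le.2 h]

/-- Total variation bound: `∑_{k<n} |h(k+1) − h(k)| ≤ 2√n` for `l ≤ n`. -/
lemma var_bound (n l : ℕ) (hl : l ≤ n) :
    ∑ k ∈ range n, |hAux l (k + 1) - hAux l k| ≤ 2 * Real.sqrt n := by
  have split := Finset.sum_range_add_sum_Ico
    (fun k => |hAux l (k + 1) - hAux l k|) hl
  rw [← split]
  have h1 : ∑ k ∈ range l, |hAux l (k + 1) - hAux l k|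
      = Real.sqrt l := by
    have : ∀ k ∈ range l, |hAux l (k + 1) - hAux l k| = hAux l k - hAux l (k + 1) := by
      intro k hk
      rw [Finset.mem_range] at hk
      rw [abs_sub_comm, abs_of_nonneg]
      rw [hAux_le l k (le_of_lt hk), hAux_le l (k + 1) hk]
      have : ((l : ℝ) - (k + 1)) ≤ (l : ℝ) - k := by push_cast; linarith
      have := Real.sqrt_le_sqrt this
      push_cast at this ⊢
      linarith
    rw [Finset.sum_congr rfl this, Finset.sum_range_sub' (hAux l) l]
    rw [hAux_le l 0 (Nat.zero_le l), hAux_le l l le_rfl]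
    simp
  have h2 : ∑ k ∈ Finset.Ico l n, |hAux l (k + 1) - hAux l k|
      = Real.sqrt ((n : ℝ) - l) := by
    have : ∀ k ∈ Finset.Ico l n, |hAux l (k + 1) - hAux l k|
        = hAux l (k + 1) - hAux l k := by
      intro k hk
      rw [Finset.mem_Ico] at hk
      rw [abs_of_nonneg]
      rw [hAux_ge l k hk.1, hAux_ge l (k + 1) (le_trans hk.1 (Nat.le_succ k))]
      have : ((k : ℝ) - l) ≤ ((k : ℝ) + 1 - l) := by linarith
      have := Real.sqrt_le_sqrt this
      push_cast at this ⊢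
      linarith
    rw [Finset.sum_congr rfl this, Finset.sum_Ico_eq_sum_range]
    have tele : ∑ k ∈ range (n - l), (hAux l (l + (k + 1)) - hAux l (l + k))
        = hAux l (l + (n - l)) - hAux l (l + 0) :=
      Finset.sum_range_sub (fun k => hAux l (l + k)) (n - l)
    rw [show (∑ k ∈ range (n - l), (hAux l (l + k + 1) - hAux l (l + k)))
        = ∑ k ∈ range (n - l), (hAux l (l + (k + 1)) - hAux l (l + k)) by
      apply Finset.sum_congr rfl; intro k _; rw [Nat.add_assoc]]
    rw [tele, Nat.add_sub_cancel' hl, Nat.add_zero, hAux_ge l n hl, hAux_ge l l le_rfl]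
    simp
  rw [h1, h2]
  have a1 : Real.sqrt l ≤ Real.sqrt n := Real.sqrt_le_sqrt (by exact_mod_cast hl)
  have a2 : Real.sqrt ((n : ℝ) - l) ≤ Real.sqrt n :=
    Real.sqrt_le_sqrt (by linarith [Nat.cast_nonneg (α := ℝ) l])
  linarith

theorem sum_abs_epsDeltaInner_isBigO :
    (fun n : ℕ => ∑ k ∈ Finset.range n, ∑ l ∈ Finset.range n, |epsDeltaInner n k l|)
      =O[Filter.atTop] (fun n : ℕ => (n : ℝ)) := by
  rw [Asymptotics.isBigO_iff]
  refine ⟨2, Filter.Eventually.of_forall fun n => ?_⟩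
  have hnonneg : (0:ℝ) ≤ ∑ k ∈ Finset.range n, ∑ l ∈ Finset.range n, |epsDeltaInner n k l| := by
    positivity
  simp only [Real.norm_eq_abs, abs_of_nonneg hnonneg,
    abs_of_nonneg (Nat.cast_nonneg (α := ℝ) n)]
  rcases Nat.eq_zero_or_pos n with h0 | h0
  · simp [h0]
  have hs : (0:ℝ) < Real.sqrt n := Real.sqrt_pos.2 (by exact_mod_cast h0)
  rw [Finset.sum_comm]
  have perl : ∀ l ∈ Finset.range n, ∑ k ∈ Finset.range n, |epsDeltaInner n k l| ≤ 2 := by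
    intro l hl
    rw [Finset.mem_range] at hl
    have hA : ∑ k ∈ Finset.range n, (Real.sqrt ((k:ℝ) + 1) - Real.sqrt k) = Real.sqrt n := by
      have := Finset.sum_range_sub (fun k : ℕ => Real.sqrt k) n
      push_cast at this
      simpa using this
    have hterm : ∀ k ∈ Finset.range n, |epsDeltaInner n k l|
        ≤ (1 / (2 * Real.sqrt n)) *
          ((Real.sqrt ((k:ℝ) + 1) - Real.sqrt k) + |hAux l (k + 1) - hAux l k|) := by
      intro k _
      unfold epsDeltaInner hAux
      rw [abs_mul, abs_of_nonneg (show (0:ℝ) ≤ 1 / (2 * Real.sqrt n) by positivity)]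
      apply mul_le_mul_of_nonneg_left _ (by positivity)
      have hA0 : 0 ≤ Real.sqrt ((k:ℝ) + 1) - Real.sqrt k := by
        have := Real.sqrt_le_sqrt (show (k:ℝ) ≤ (k:ℝ) + 1 by linarith)
        linarith
      push_cast
      have heq : Real.sqrt ((k:ℝ) + 1) - Real.sqrt k
            - Real.sqrt (|(k : ℝ) + 1 - l|) + Real.sqrt (|(k : ℝ) - l|)
          = (Real.sqrt ((k:ℝ) + 1) - Real.sqrt k)
            - (Real.sqrt (|(k : ℝ) + 1 - l|) - Real.sqrt (|(k : ℝ) - l|)) := by ring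
      rw [heq]
      calc |(Real.sqrt ((k:ℝ) + 1) - Real.sqrt k)
            - (Real.sqrt (|(k : ℝ) + 1 - l|) - Real.sqrt (|(k : ℝ) - l|))|
          ≤ |Real.sqrt ((k:ℝ) + 1) - Real.sqrt k|
            + |Real.sqrt (|(k : ℝ) + 1 - l|) - Real.sqrt (|(k : ℝ) - l|)| := abs_sub _ _
        _ = (Real.sqrt ((k:ℝ) + 1) - Real.sqrt k)
            + |Real.sqrt (|(k : ℝ) + 1 - l|) - Real.sqrt (|(k : ℝ) - l|)| := by
            rw [abs_of_nonneg hA0]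
    calc ∑ k ∈ Finset.range n, |epsDeltaInner n k l|
        ≤ ∑ k ∈ Finset.range n, (1 / (2 * Real.sqrt n)) *
            ((Real.sqrt ((k:ℝ) + 1) - Real.sqrt k) + |hAux l (k + 1) - hAux l k|) :=
          Finset.sum_le_sum hterm
      _ = (1 / (2 * Real.sqrt n)) *
            ((∑ k ∈ Finset.range n, (Real.sqrt ((k:ℝ) + 1) - Real.sqrt k))
              + ∑ k ∈ Finset.range n, |hAux l (k + 1) - hAux l k|) := by
          rw [← Finset.mul_sum, Finset.sum_add_distrib]
      _ ≤ (1 / (2 * Real.sqrt n)) * (Real.sqrt n + 2 * Real.sqrt n) := by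
          rw [hA]
          apply mul_le_mul_of_nonneg_left _ (by positivity)
          have := var_bound n l (le_of_lt hl)
          linarith
      _ = 3 / 2 := by field_simp; ring
      _ ≤ 2 := by norm_num
  calc ∑ l ∈ Finset.range n, ∑ k ∈ Finset.range n, |epsDeltaInner n k l|
      ≤ ∑ _l ∈ Finset.range n, (2:ℝ) := Finset.sum_le_sum perl
    _ = 2 * n := by simp [mul_comm]
end

section
/- With H = 1/4 and the same notation, for each fixed l ∈ {0,…,n−1}, the sum over k from 0 to n−1 of |⟨ε_{l/n}, δ_{k/n}⟩| is at most 1/2 + (1/(2√n))(√l + √(n−l)); in particular the supremum over l of these sums is O(1) as n → ∞. -/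
open Real Finset

lemma abs_tel (n l : ℕ) (hl : l ≤ n) :
    ∑ k ∈ Finset.range n,
      |Real.sqrt (|(k : ℝ) + 1 - l|) - Real.sqrt (|(k : ℝ) - l|)|
      = Real.sqrt l + Real.sqrt ((n : ℝ) - l) := by
  set f : ℕ → ℝ := fun k => Real.sqrt (|(k : ℝ) - l|) with hf
  have hterm : ∀ k : ℕ,
      |Real.sqrt (|(k : ℝ) + 1 - l|) - Real.sqrt (|(k : ℝ) - l|)|
        = |f (k + 1) - f k| := by
    intro k
    simp only [hf]
    push_cast
    ring_nf
  have hsplit : Finset.range n = Finset.Ico 0 l ∪ Finset.Ico l n := by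
    rw [Finset.range_eq_Ico, Finset.Ico_union_Ico_eq_Ico (Nat.zero_le l) hl]
  calc ∑ k ∈ Finset.range n,
      |Real.sqrt (|(k : ℝ) + 1 - l|) - Real.sqrt (|(k : ℝ) - l|)|
      = ∑ k ∈ Finset.range n, |f (k + 1) - f k| := by
        exact Finset.sum_congr rfl fun k _ => hterm k
    _ = ∑ k ∈ Finset.Ico 0 l, |f (k + 1) - f k|
        + ∑ k ∈ Finset.Ico l n, |f (k + 1) - f k| := by
        rw [hsplit, Finset.sum_union]
        exact Finset.Ico_disjoint_Ico_consecutive 0 l n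
    _ = Real.sqrt l + Real.sqrt ((n : ℝ) - l) := by
        have h1 : ∑ k ∈ Finset.Ico 0 l, |f (k + 1) - f k| = Real.sqrt l := by
          rw [← Finset.range_eq_Ico]
          have : ∀ k ∈ Finset.range l, |f (k + 1) - f k| = f k - f (k + 1) := by
            intro k hk
            rw [Finset.mem_range] at hk
            have hk1 : (k : ℝ) + 1 ≤ l := by exact_mod_cast hk
            have e1 : f (k + 1) = Real.sqrt ((l : ℝ) - (k + 1)) := by
              simp only [hf]
              congr 1
              push_cast
              rw [abs_of_nonpos] <;> push_cast <;> linarith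
            have e2 : f k = Real.sqrt ((l : ℝ) - k) := by
              simp only [hf]
              congr 1
              rw [abs_of_nonpos] <;> linarith
            rw [abs_of_nonpos]
            · ring
            · rw [e1, e2]
              have := Real.sqrt_le_sqrt (show (l : ℝ) - (k + 1) ≤ (l : ℝ) - k by linarith)
              linarith
          rw [Finset.sum_congr rfl this, Finset.sum_range_sub' f]
          simp [hf]
        have h2 : ∑ k ∈ Finset.Ico l n, |f (k + 1) - f k| = Real.sqrt ((n : ℝ) - l) := by
          rw [Finset.sum_Ico_eq_sum_range]
          have : ∀ j ∈ Finset.range (n - l), |f (l + j + 1) - f (l + j)| =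
              f (l + j + 1) - f (l + j) := by
            intro j _
            have e1 : f (l + j) = Real.sqrt ((j : ℝ)) := by
              simp only [hf]
              congr 1
              push_cast
              rw [abs_of_nonneg] <;> linarith [Nat.cast_nonneg (α := ℝ) j]
            have e2 : f (l + j + 1) = Real.sqrt ((j : ℝ) + 1) := by
              simp only [hf]
              congr 1
              push_cast
              rw [abs_of_nonneg] <;> linarith [Nat.cast_nonneg (α := ℝ) j]
            rw [abs_of_nonneg]
            rw [e1, e2]
            have := Real.sqrt_le_sqrt (show (j : ℝ) ≤ (j : ℝ) + 1 by linarith)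
            linarith
          rw [Finset.sum_congr rfl this]
          have := Finset.sum_range_sub (fun j => f (l + j)) (n - l)
          have key : ∑ j ∈ Finset.range (n - l), (f (l + j + 1) - f (l + j))
              = f (l + (n - l)) - f (l + 0) := by
            rw [← this]
            apply Finset.sum_congr rfl
            intro j _
            ring_nf
          rw [key]
          have hln : l + (n - l) = n := Nat.add_sub_cancel' hl
          rw [hln]
          simp only [hf, Nat.add_zero]
          rw [sub_self, abs_zero, Real.sqrt_zero, sub_zero]
          congr 1
          rw [abs_of_nonneg]
          have : (l : ℝ) ≤ n := by exact_mod_cast hl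
          linarith
        rw [h1, h2]

lemma main_bound (n : ℕ) (hn : 1 ≤ n) (l : ℕ) (hl : l < n) :
    ∑ k ∈ Finset.range n, |epsDeltaInner n k l|
      ≤ 1 / 2 + (1 / (2 * Real.sqrt n)) * (Real.sqrt l + Real.sqrt ((n : ℝ) - l)) := by
  have hsn : 0 < Real.sqrt n := Real.sqrt_pos.mpr (by exact_mod_cast hn)
  have hc : (0:ℝ) ≤ 1 / (2 * Real.sqrt n) := by positivity
  have hstep : ∀ k : ℕ, |epsDeltaInner n k l| ≤
      (1 / (2 * Real.sqrt n)) *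
        ((Real.sqrt (k + 1) - Real.sqrt k)
          + |Real.sqrt (|(k : ℝ) + 1 - l|) - Real.sqrt (|(k : ℝ) - l|)|) := by
    intro k
    rw [epsDeltaInner, abs_mul, abs_of_nonneg hc]
    apply mul_le_mul_of_nonneg_left _ hc
    have hmono : Real.sqrt k ≤ Real.sqrt (k + 1) :=
      Real.sqrt_le_sqrt (by linarith [Nat.cast_nonneg (α := ℝ) k])
    calc abs (Real.sqrt ((k:ℝ) + 1) - Real.sqrt (k:ℝ) - Real.sqrt (abs ((k:ℝ) + 1 - l)) + Real.sqrt (abs ((k:ℝ) - l)))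
        = abs ((Real.sqrt ((k:ℝ) + 1) - Real.sqrt (k:ℝ)) - (Real.sqrt (abs ((k:ℝ) + 1 - l)) - Real.sqrt (abs ((k:ℝ) - l)))) := by
          ring_nf
      _ ≤ abs (Real.sqrt ((k:ℝ) + 1) - Real.sqrt (k:ℝ)) + abs (Real.sqrt (abs ((k:ℝ) + 1 - l)) - Real.sqrt (abs ((k:ℝ) - l))) :=
          abs_sub _ _
      _ = (Real.sqrt ((k:ℝ) + 1) - Real.sqrt (k:ℝ)) + abs (Real.sqrt (abs ((k:ℝ) + 1 - l)) - Real.sqrt (abs ((k:ℝ) - l))) := by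
          rw [abs_of_nonneg (by linarith)]
  calc ∑ k ∈ Finset.range n, |epsDeltaInner n k l|
      ≤ ∑ k ∈ Finset.range n, (1 / (2 * Real.sqrt n)) *
          ((Real.sqrt (k + 1) - Real.sqrt k)
            + |Real.sqrt (|(k : ℝ) + 1 - l|) - Real.sqrt (|(k : ℝ) - l|)|) :=
        Finset.sum_le_sum fun k _ => hstep k
    _ = (1 / (2 * Real.sqrt n)) *
          (∑ k ∈ Finset.range n, (Real.sqrt (k + 1) - Real.sqrt k)
            + ∑ k ∈ Finset.range n, |Real.sqrt (|(k : ℝ) + 1 - l|) - Real.sqrt (|(k : ℝ) - l|)|) := by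
        rw [← Finset.mul_sum, Finset.sum_add_distrib]
    _ = 1 / 2 + (1 / (2 * Real.sqrt n)) * (Real.sqrt l + Real.sqrt ((n : ℝ) - l)) := by
        have htel : ∑ k ∈ Finset.range n, (Real.sqrt (k + 1) - Real.sqrt k) = Real.sqrt n := by
          have := Finset.sum_range_sub (fun k : ℕ => Real.sqrt k) n
          simp only [Nat.cast_zero, Real.sqrt_zero, sub_zero] at this
          rw [← this]
          apply Finset.sum_congr rfl
          intro k _
          push_cast
          ring_nf
        rw [htel, abs_tel n l hl.le, mul_add]
        congr 1
        field_simp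

theorem sum_abs_epsDeltaInner_bound :
    (∀ n : ℕ, 1 ≤ n → ∀ l : ℕ, l < n →
      ∑ k ∈ Finset.range n, |epsDeltaInner n k l|
        ≤ 1 / 2 + (1 / (2 * Real.sqrt n)) * (Real.sqrt l + Real.sqrt ((n : ℝ) - l)))
    ∧ ∃ C : ℝ, ∀ n : ℕ, 1 ≤ n → ∀ l : ℕ, l < n →
        ∑ k ∈ Finset.range n, |epsDeltaInner n k l| ≤ C := by
  constructor
  · exact main_bound
  · refine ⟨3/2, fun n hn l hl => ?_⟩
    have h := main_bound n hn l hl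
    have hsn : 0 < Real.sqrt n := Real.sqrt_pos.mpr (by exact_mod_cast hn)
    have hln : (l : ℝ) ≤ n := by exact_mod_cast hl.le
    have h1 : Real.sqrt l ≤ Real.sqrt n := Real.sqrt_le_sqrt hln
    have h2 : Real.sqrt ((n : ℝ) - l) ≤ Real.sqrt n :=
      Real.sqrt_le_sqrt (by linarith [Nat.cast_nonneg (α := ℝ) l])
    have h3 : (1 / (2 * Real.sqrt n)) * (Real.sqrt l + Real.sqrt ((n : ℝ) - l))
        ≤ (1 / (2 * Real.sqrt n)) * (2 * Real.sqrt n) := by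
      apply mul_le_mul_of_nonneg_left (by linarith) (by positivity)
    have h4 : (1 / (2 * Real.sqrt n)) * (2 * Real.sqrt n) = 1 := by
      field_simp
    linarith
end
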